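/- Let A ∈ L(V, V*) be self-adjoint and elliptic on V_ker = ker B with B satisfying the inf-sup condition, and let u solve the linear PDAE u̇ + A u + B* λ = f, B u = g with f ∈ L²(0,T;H), g ∈ H¹(0,T;Q*), and consistent initial value u_0 ∈ V (B u_0 = g(0)). Then for all t ∈ [0,T]: ‖u(t) - B⁻ g(t)‖_A² ≤ ‖u_0 - B⁻ g(0)‖_A² + ∫_0^t ‖f(s) - B⁻ ġ(s)‖_H² ds, where ‖v‖_A² = ⟨A v, v⟩ and B⁻ is the A-orthogonal right-inverse of B. -/

import Mathlib

open intervalIntegral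

/-- Energy estimate for the linear PDAE u̇ + A u + B* λ = f, B u = g (A self-adjoint,
elliptic on ker B, B inf-sup stable): for all t ∈ [0,T],
‖u(t) - B⁻g(t)‖²_A ≤ ‖u(0) - B⁻g(0)‖²_A + ∫₀ᵗ ‖f(s) - B⁻ġ(s)‖²_H ds,
where ‖v‖²_A = ⟨Av, v⟩ and B⁻ is the A-orthogonal right-inverse of B. -/
theorem pdae_energy_estimate
    {V H Q : Type*} [NormedAddCommGroup V] [InnerProductSpace ℝ V] [CompleteSpace V]
    [NormedAddCommGroup H] [InnerProductSpace ℝ H] [CompleteSpace H]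
    [NormedAddCommGroup Q] [InnerProductSpace ℝ Q] [CompleteSpace Q]
    (ι : V →L[ℝ] H)                                  -- Gelfand triple embedding V ↪ H
    (a : V →L[ℝ] V →L[ℝ] ℝ)                          -- the form of A ∈ L(V, V*)
    (B : V →L[ℝ] (Q →L[ℝ] ℝ))                        -- B ∈ L(V, Q*)
    (Binv : (Q →L[ℝ] ℝ) →L[ℝ] V)                     -- A-orthogonal right-inverse B⁻
    (μ β T : ℝ) (hμ : 0 < μ) (hβ : 0 < β) (hT : 0 < T)
    (hsym : ∀ v w : V, a v w = a w v)                                   -- A self-adjoint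
    (hell : ∀ v : V, (∀ q : Q, B v q = 0) → μ * ‖v‖ ^ 2 ≤ a v v)       -- elliptic on ker B
    (hinfsup : ∀ q : Q, β * ‖q‖ ≤ ⨆ v : {v : V // v ≠ 0}, B v q / ‖(v : V)‖)
    (hrinv : ∀ g : Q →L[ℝ] ℝ, B (Binv g) = g)                          -- B B⁻ = id
    (hBinvVc : ∀ g : Q →L[ℝ] ℝ, ∀ w : V, (∀ q : Q, B w q = 0) →
      a (Binv g) w = 0)                                                 -- image B⁻ ⊆ V_c
    (u u' : ℝ → V) (lam : ℝ → Q) (f : ℝ → H) (g g' : ℝ → (Q →L[ℝ] ℝ))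
    (hu' : ∀ t ∈ Set.Icc (0:ℝ) T, HasDerivWithinAt u (u' t) (Set.Icc 0 T) t)
    (hg' : ∀ t ∈ Set.Icc (0:ℝ) T, HasDerivWithinAt g (g' t) (Set.Icc 0 T) t)
    (hu'c : ContinuousOn u' (Set.Icc 0 T)) (hfc : ContinuousOn f (Set.Icc 0 T))
    (hg'c : ContinuousOn g' (Set.Icc 0 T))
    -- the dynamic equation u̇ + A u + B* λ = f in V*:
    (heq : ∀ t ∈ Set.Icc (0:ℝ) T, ∀ v : V,
      inner ℝ (ι (u' t)) (ι v) + a (u t) v + B v (lam t) = (inner ℝ (f t) (ι v) : ℝ))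
    -- the constraint B u = g in Q*:
    (hcon : ∀ t ∈ Set.Icc (0:ℝ) T, ∀ q : Q, B (u t) q = g t q) :
    ∀ t ∈ Set.Icc (0:ℝ) T,
      a (u t - Binv (g t)) (u t - Binv (g t)) ≤
        a (u 0 - Binv (g 0)) (u 0 - Binv (g 0)) +
          ∫ s in (0:ℝ)..t, ‖f s - ι (Binv (g' s))‖ ^ 2 := by
  intro t ht
  set I := Set.Icc (0:ℝ) T with hI
  -- the projection onto I
  set π : ℝ → ℝ := fun s => max 0 (min s T) with hπ
  have hπc : Continuous π := continuous_const.max (continuous_id.min continuous_const)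
  have hπmem : ∀ s, π s ∈ I := by
    intro s
    constructor
    · exact le_max_left _ _
    · exact max_le hT.le (min_le_right _ _)
  have hπid : ∀ s ∈ I, π s = s := by
    intro s hs
    simp only [hπ]
    rw [min_eq_left hs.2, max_eq_right hs.1]
  -- shorthand functions
  set w : ℝ → V := fun s => u s - Binv (g s) with hw
  set w' : ℝ → V := fun s => u' s - Binv (g' s) with hw'
  set d : ℝ → H := fun s => f s - ι (Binv (g' s)) with hd
  -- derivative of w
  have hwD : ∀ s ∈ I, HasDerivWithinAt w (w' s) I s := by
    intro s hs
    exact (hu' s hs).sub (Binv.hasFDerivAt.comp_hasDerivWithinAt s (hg' s hs))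
  -- B u' = g'
  have hBu' : ∀ s ∈ I, B (u' s) = g' s := by
    intro s hs
    have h1 : HasDerivWithinAt (fun τ => B (u τ)) (B (u' s)) I s :=
      B.hasFDerivAt.comp_hasDerivWithinAt s (hu' s hs)
    have h2 : HasDerivWithinAt (fun τ => B (u τ)) (g' s) I s := by
      refine (hg' s hs).congr (fun τ hτ => ?_) ?_
      · ext q; exact hcon τ hτ q
      · ext q; exact hcon s hs q
    have hud : UniqueDiffWithinAt ℝ I s := (uniqueDiffOn_Icc hT) s hs
    rw [← h1.derivWithin hud]
    exact h2.derivWithin hud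
  -- w, w' are in ker B
  have hwker : ∀ s ∈ I, ∀ q : Q, B (w s) q = 0 := by
    intro s hs q
    simp only [hw, map_sub, ContinuousLinearMap.sub_apply, hrinv, hcon s hs q, sub_self, ContinuousLinearMap.zero_apply]
  have hw'ker : ∀ s ∈ I, ∀ q : Q, B (w' s) q = 0 := by
    intro s hs q
    simp only [hw', map_sub, ContinuousLinearMap.sub_apply, hrinv, hBu' s hs, sub_self, ContinuousLinearMap.zero_apply]
  -- key pointwise inequality
  have hkey : ∀ s ∈ I, a (w' s) (w s) + a (w s) (w' s) ≤ ‖d s‖ ^ 2 := by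
    intro s hs
    have e1 := heq s hs (w' s)
    have e2 : B (w' s) (lam s) = 0 := hw'ker s hs (lam s)
    have e3 : a (u s) (w' s) = a (w s) (w' s) := by
      have : a (Binv (g s)) (w' s) = 0 := hBinvVc (g s) (w' s) (hw'ker s hs)
      have hu_eq : u s = w s + Binv (g s) := by simp [hw]
      rw [hu_eq, map_add, ContinuousLinearMap.add_apply, this, add_zero]
    have e4 : (inner ℝ (ι (u' s)) (ι (w' s)) : ℝ)
        = ‖ι (w' s)‖ ^ 2 + inner ℝ (ι (Binv (g' s))) (ι (w' s)) := by
      have hu'_eq : u' s = w' s + Binv (g' s) := by simp [hw']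
      rw [hu'_eq, map_add, inner_add_left, real_inner_self_eq_norm_sq]
    have e5 : a (w s) (w' s)
        = inner ℝ (d s) (ι (w' s)) - ‖ι (w' s)‖ ^ 2 := by
      have : (inner ℝ (ι (Binv (g' s))) (ι (w' s)) : ℝ)
          = inner ℝ (ι (w' s)) (ι (Binv (g' s))) := real_inner_comm _ _
      rw [e2, add_zero, e3, e4] at e1
      simp only [hd, inner_sub_left]
      linarith [e1]
    have e6 : (inner ℝ (d s) (ι (w' s)) : ℝ) ≤ ‖d s‖ * ‖ι (w' s)‖ :=
      real_inner_le_norm _ _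
    have e7 : 2 * ‖d s‖ * ‖ι (w' s)‖ ≤ ‖d s‖ ^ 2 + ‖ι (w' s)‖ ^ 2 :=
      two_mul_le_add_sq _ _
    have e8 : a (w' s) (w s) = a (w s) (w' s) := hsym _ _
    have h0 : (0:ℝ) ≤ ‖ι (w' s)‖ ^ 2 := sq_nonneg _
    rw [e8, e5]
    nlinarith
  -- continuity of d on I and the extended integrand
  have hdc : ContinuousOn d I := hfc.sub (ι.continuous.comp_continuousOn
    (Binv.continuous.comp_continuousOn hg'c))
  set dd : ℝ → ℝ := fun s => ‖d (π s)‖ ^ 2 with hdd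
  have hddc : Continuous dd := by
    have : Continuous fun s => d (π s) :=
      hdc.comp_continuous hπc hπmem
    exact (this.norm.pow 2)
  -- F = energy minus primitive of dd
  set E : ℝ → ℝ := fun s => a (w s) (w s) with hE
  set F : ℝ → ℝ := fun s => E s - ∫ τ in (0:ℝ)..s, dd τ with hF
  -- derivative of E within I
  have hED : ∀ s ∈ I, HasDerivWithinAt E (a (w' s) (w s) + a (w s) (w' s)) I s := by
    intro s hs
    exact (a.hasFDerivAt.comp_hasDerivWithinAt s (hwD s hs)).clm_apply (hwD s hs)
  -- derivative of the primitive
  have hPD : ∀ s : ℝ, HasDerivAt (fun τ => ∫ x in (0:ℝ)..τ, dd x) (dd s) s := by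
    intro s
    exact intervalIntegral.integral_hasDerivAt_right
      (hddc.intervalIntegrable _ _)
      (hddc.stronglyMeasurableAtFilter _ _)
      hddc.continuousAt
  have hFD : ∀ s ∈ I, HasDerivWithinAt F
      (a (w' s) (w s) + a (w s) (w' s) - dd s) I s := by
    intro s hs
    exact (hED s hs).sub ((hPD s).hasDerivWithinAt)
  -- F is antitone on I
  have hanti : AntitoneOn F I := by
    refine antitoneOn_of_hasDerivWithinAt_nonpos (convex_Icc 0 T)
      (fun s hs => (hFD s hs).continuousWithinAt)
      (fun s hs => ((hFD s (interior_subset hs)).mono interior_subset)) ?_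
    intro s hs
    rw [interior_Icc] at hs
    have hsI : s ∈ I := Set.mem_Icc_of_Ioo hs
    have := hkey s hsI
    have hdds : dd s = ‖d s‖ ^ 2 := by simp only [hdd, hπid s hsI]
    rw [hdds]
    linarith
  have h0I : (0:ℝ) ∈ I := Set.left_mem_Icc.2 hT.le
  have hft := hanti h0I ht ht.1
  -- unfold F
  simp only [hF, hE, intervalIntegral.integral_same, sub_zero] at hft
  have hint : (∫ τ in (0:ℝ)..t, dd τ) = ∫ s in (0:ℝ)..t, ‖f s - ι (Binv (g' s))‖ ^ 2 := by
    refine intervalIntegral.integral_congr ?_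
    intro τ hτ
    rw [Set.uIcc_of_le ht.1] at hτ
    have hτI : τ ∈ I := ⟨hτ.1, hτ.2.trans ht.2⟩
    simp only [hdd, hπid τ hτI, hd]
  rw [hint] at hft
  linarith
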